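/- Let G be a simple graph on n vertices whose edge set can be partitioned into α sets each forming a forest, and let r, s > 0 be real numbers. Let M be the set of vertices of G of degree at least r. Then the number of vertices in M that have at least s neighbors in M is at most 4α²n/(rs). -/

import Mathlib

section Aux

open Finset SimpleGraph

variable {W : Type*}

lemma isAcyclic_induce {H : SimpleGraph W} (hH : H.IsAcyclic) (s : Set W) :
    (H.induce s).IsAcyclic := by
  intro v p hp
  exact hH _ (SimpleGraph.Walk.IsCycle.map (f := (SimpleGraph.Embedding.induce (G := H) s).toHom) (SimpleGraph.Embedding.induce (G := H) s).injective hp)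

lemma induce_supp_connected (H : SimpleGraph W) (C : H.ConnectedComponent) :
    (H.induce C.supp).Connected := by
  classical
  rw [SimpleGraph.connected_induce_iff,
    SimpleGraph.Subgraph.connected_iff_forall_exists_walk_subgraph]
  refine ⟨?_, ?_⟩
  · obtain ⟨v, hv⟩ := C.exists_rep
    exact ⟨v, by simpa using (C.mem_supp_iff v).2 hv⟩
  · intro u v hu hv
    simp only [SimpleGraph.Subgraph.induce_verts, SimpleGraph.Subgraph.verts_top] at hu hv
    rw [SimpleGraph.ConnectedComponent.mem_supp_iff] at hu hv
    obtain ⟨p⟩ := SimpleGraph.ConnectedComponent.exact (hu.trans hv.symm)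
    refine ⟨p, le_trans p.toSubgraph_le_induce_support ?_⟩
    apply SimpleGraph.Subgraph.induce_mono_right
    intro w hw
    rw [Set.mem_setOf_eq] at hw
    have hreach : H.Reachable u w := ⟨p.takeUntil w hw⟩
    rw [SimpleGraph.ConnectedComponent.mem_supp_iff, ← hu]
    exact (SimpleGraph.ConnectedComponent.sound hreach).symm

section
variable [Fintype W] [DecidableEq W]

instance decRelInduce (H : SimpleGraph W) [DecidableRel H.Adj] (s : Set W) :
    DecidableRel (H.induce s).Adj :=
  fun a b => inferInstanceAs (Decidable (H.Adj ↑a ↑b))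

lemma degree_induce (H : SimpleGraph W) [DecidableRel H.Adj] (s : Set W) [DecidablePred (· ∈ s)]
    (hcl : ∀ ⦃a b⦄, a ∈ s → H.Adj a b → b ∈ s) (v : s) :
    (H.induce s).degree v = H.degree (v : W) := by
  unfold SimpleGraph.degree
  refine Finset.card_bij (fun u _ => (u : W)) ?_ ?_ ?_
  · intro u hu
    rw [SimpleGraph.mem_neighborFinset] at hu ⊢
    exact hu
  · intro a _ b _ h
    exact Subtype.ext h
  · intro b hb
    rw [SimpleGraph.mem_neighborFinset] at hb
    exact ⟨⟨b, hcl v.2 hb⟩, by rw [SimpleGraph.mem_neighborFinset]; exact hb, rfl⟩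

lemma degSum_le (H : SimpleGraph W) [DecidableRel H.Adj] (hH : H.IsAcyclic) :
    ∑ v, H.degree v ≤ 2 * Fintype.card W := by
  classical
  rw [← Finset.sum_fiberwise_of_maps_to (g := fun v => H.connectedComponentMk v)
    (t := Finset.univ) (fun x _ => Finset.mem_univ _) (fun v => H.degree v)]
  have hcard : Fintype.card W = ∑ C : H.ConnectedComponent,
      (Finset.univ.filter (fun v => H.connectedComponentMk v = C)).card := by
    rw [← Finset.card_univ]
    exact Finset.card_eq_sum_card_fiberwise (fun x _ => Finset.mem_univ _)
  rw [hcard, Finset.mul_sum]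
  apply Finset.sum_le_sum
  intro C _
  -- per-component bound
  have hconn := induce_supp_connected H C
  have htree : (H.induce C.supp).IsTree := ⟨hconn, isAcyclic_induce hH _⟩
  have hedge := htree.card_edgeFinset
  have hsum := SimpleGraph.sum_degrees_eq_twice_card_edges (H.induce C.supp)
  have hmemiff : ∀ x, x ∈ Finset.univ.filter (fun v => H.connectedComponentMk v = C)
      ↔ x ∈ C.supp := by
    intro x
    simp [SimpleGraph.ConnectedComponent.mem_supp_iff]
  have hcl : ∀ ⦃a b : W⦄, a ∈ C.supp → H.Adj a b → b ∈ C.supp := by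
    intro a b ha hab
    rw [SimpleGraph.ConnectedComponent.mem_supp_iff] at ha ⊢
    rw [← ha]
    exact (SimpleGraph.ConnectedComponent.sound hab.reachable).symm
  have htrans : ∑ v ∈ Finset.univ.filter (fun v => H.connectedComponentMk v = C), H.degree v
      = ∑ v : C.supp, (H.induce C.supp).degree v := by
    rw [Finset.sum_subtype _ hmemiff (fun v => H.degree v)]
    exact Finset.sum_congr rfl fun v _ => (degree_induce H C.supp hcl v).symm
  have hcard2 : Fintype.card C.supp
      = (Finset.univ.filter (fun v => H.connectedComponentMk v = C)).card := by
    rw [← Set.toFinset_card]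
    congr 1
    ext x
    simp [SimpleGraph.ConnectedComponent.mem_supp_iff]
  rw [htrans, hsum, ← hcard2]
  omega

lemma degree_induce_coe (H : SimpleGraph W) [DecidableRel H.Adj] (S : Finset W)
    (v : (↑S : Set W)) :
    (H.induce (↑S : Set W)).degree v = ((H.neighborFinset ↑v) ∩ S).card := by
  unfold SimpleGraph.degree
  refine Finset.card_bij (fun u _ => (u : W)) ?_ ?_ ?_
  · intro u hu
    rw [SimpleGraph.mem_neighborFinset] at hu
    rw [Finset.mem_inter, SimpleGraph.mem_neighborFinset]
    exact ⟨hu, u.2⟩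
  · intro a _ b _ h
    exact Subtype.ext h
  · intro b hb
    rw [Finset.mem_inter, SimpleGraph.mem_neighborFinset] at hb
    exact ⟨⟨b, hb.2⟩, by rw [SimpleGraph.mem_neighborFinset]; exact hb.1, rfl⟩

lemma sum_card_inter_le (H : SimpleGraph W) [DecidableRel H.Adj] (hH : H.IsAcyclic)
    (S : Finset W) :
    ∑ v ∈ S, ((H.neighborFinset v) ∩ S).card ≤ 2 * S.card := by
  classical
  have key := degSum_le (H.induce (↑S : Set W)) (isAcyclic_induce hH _)
  have h1 : ∑ v ∈ S, ((H.neighborFinset v) ∩ S).card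
      = ∑ v : (↑S : Set W), (H.induce (↑S : Set W)).degree v := by
    rw [Finset.sum_subtype _ (fun x => Finset.mem_coe.symm) (fun v => ((H.neighborFinset v) ∩ S).card)]
    exact Finset.sum_congr rfl fun v _ => (degree_induce_coe H S v).symm
  have h2 : Fintype.card (↑S : Set W) = S.card := by
    rw [← Set.toFinset_card]
    congr 1
    ext x
    simp
  rw [h1, ← h2]
  exact key

end

end Aux

/-- The subgraph of `G` consisting of the edges with label `i` under the edge-labeling `c`. -/
def labelGraph {V : Type*} {k : ℕ} (G : SimpleGraph V) (c : Sym2 V → Fin k) (i : Fin k) :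
    SimpleGraph V where
  Adj u v := G.Adj u v ∧ c s(u, v) = i
  symm := by
    constructor
    intro u v ⟨h1, h2⟩
    exact ⟨h1.symm, by rwa [Sym2.eq_swap]⟩
  loopless := ⟨fun v ⟨h, _⟩ => G.ne_of_adj h rfl⟩


instance {V : Type*} {k : ℕ} (G : SimpleGraph V) [DecidableRel G.Adj] (c : Sym2 V → Fin k)
    (i : Fin k) : DecidableRel (labelGraph G c i).Adj :=
  fun u v => inferInstanceAs (Decidable (G.Adj u v ∧ c s(u, v) = i))

/-- Let `G` be a simple graph on `n` vertices whose edge set can be partitioned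
into `α` sets each forming a forest, and let `r, s > 0` be real numbers. Let `M` be the set of
vertices of `G` of degree at least `r`. Then the number of vertices in `M` that have at least `s`
neighbors in `M` is at most `4α²n/(rs)`. -/
theorem stmt5 {V : Type*} [Fintype V] [DecidableEq V] (G : SimpleGraph V) [DecidableRel G.Adj]
    (n α : ℕ) (hcard : Fintype.card V = n)
    (c : Sym2 V → Fin α) (hforest : ∀ i : Fin α, (labelGraph G c i).IsAcyclic)
    (r s : ℝ) (hr : 0 < r) (hs : 0 < s) :
    ((Finset.univ.filter (fun v : V => r ≤ (G.degree v : ℝ) ∧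
        s ≤ (((G.neighborFinset v).filter (fun u => r ≤ (G.degree u : ℝ))).card : ℝ))).card : ℝ)
      ≤ 4 * α ^ 2 * n / (r * s) := by
  classical
  set M : Finset V := Finset.univ.filter (fun v : V => r ≤ (G.degree v : ℝ)) with hM
  set M' : Finset V := Finset.univ.filter (fun v : V => r ≤ (G.degree v : ℝ) ∧
      s ≤ (((G.neighborFinset v).filter (fun u => r ≤ (G.degree u : ℝ))).card : ℝ)) with hM'
  -- decomposition of neighborhoods by labels
  have hdeg : ∀ (v : V) (T : Finset V), ((G.neighborFinset v) ∩ T).card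
      = ∑ i : Fin α, (((labelGraph G c i).neighborFinset v) ∩ T).card := by
    intro v T
    rw [Finset.card_eq_sum_card_fiberwise (f := fun u => c s(v, u)) (t := Finset.univ)
      (fun x _ => Finset.mem_univ _)]
    refine Finset.sum_congr rfl fun i _ => ?_
    congr 1
    ext u
    simp only [Finset.mem_filter, Finset.mem_inter, SimpleGraph.mem_neighborFinset]
    constructor
    · rintro ⟨⟨ha, ht⟩, hc⟩
      exact ⟨⟨ha, hc⟩, ht⟩
    · rintro ⟨⟨ha, hc⟩, ht⟩
      exact ⟨⟨ha, ht⟩, hc⟩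
  -- key counting bound
  have key : ∀ T : Finset V, ∑ v ∈ T, ((G.neighborFinset v) ∩ T).card ≤ 2 * α * T.card := by
    intro T
    calc ∑ v ∈ T, ((G.neighborFinset v) ∩ T).card
        = ∑ v ∈ T, ∑ i : Fin α, (((labelGraph G c i).neighborFinset v) ∩ T).card :=
          Finset.sum_congr rfl fun v _ => hdeg v T
      _ = ∑ i : Fin α, ∑ v ∈ T, (((labelGraph G c i).neighborFinset v) ∩ T).card :=
          Finset.sum_comm
      _ ≤ ∑ _i : Fin α, 2 * T.card :=
          Finset.sum_le_sum fun i _ => sum_card_inter_le _ (hforest i) T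
      _ = α * (2 * T.card) := by
          rw [Finset.sum_const, Finset.card_univ, Fintype.card_fin, smul_eq_mul]
      _ = 2 * α * T.card := by ring
  -- Step 1 : |M| * r ≤ 2αn
  have step1 : (M.card : ℝ) * r ≤ 2 * α * n := by
    have hr1 : (M.card : ℝ) * r ≤ ∑ v ∈ M, (G.degree v : ℝ) := by
      have h := Finset.sum_le_sum (s := M) (f := fun _ => r)
        (g := fun v => (G.degree v : ℝ)) (fun v hv => (Finset.mem_filter.1 hv).2)
      simpa [mul_comm] using h
    have hr3 : ∑ v : V, G.degree v ≤ 2 * α * n := by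
      have h := key Finset.univ
      rw [Finset.card_univ, hcard] at h
      calc ∑ v : V, G.degree v
          = ∑ v : V, ((G.neighborFinset v) ∩ Finset.univ).card := by
            simp only [Finset.inter_univ]
            rfl
        _ ≤ 2 * α * n := h
    have hr4 : ∑ v : V, (G.degree v : ℝ) ≤ 2 * α * n := by
      exact_mod_cast hr3
    have hr2 : ∑ v ∈ M, (G.degree v : ℝ) ≤ ∑ v : V, (G.degree v : ℝ) :=
      Finset.sum_le_sum_of_subset_of_nonneg (Finset.subset_univ M)
        (fun v _ _ => Nat.cast_nonneg _)
    linarith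
  -- Step 2 : |M'| * s ≤ 2α|M|
  have hsub : M' ⊆ M := by
    intro v hv
    rw [hM', Finset.mem_filter] at hv
    exact Finset.mem_filter.2 ⟨Finset.mem_univ _, hv.2.1⟩
  have hfe : ∀ v : V, (G.neighborFinset v).filter (fun u => r ≤ (G.degree u : ℝ))
      = G.neighborFinset v ∩ M := by
    intro v
    ext u
    simp [hM, Finset.mem_filter, Finset.mem_inter]
  have step2 : (M'.card : ℝ) * s ≤ 2 * α * M.card := by
    have hs1 : (M'.card : ℝ) * s ≤ ∑ v ∈ M', (((G.neighborFinset v) ∩ M).card : ℝ) := by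
      have h := Finset.sum_le_sum (s := M') (f := fun _ => s)
        (g := fun v => (((G.neighborFinset v) ∩ M).card : ℝ)) (fun v hv => by
          have h2 := ((Finset.mem_filter.1 hv).2).2
          rw [hfe v] at h2
          exact h2)
      simpa [mul_comm] using h
    have hs2 : ∑ v ∈ M', (((G.neighborFinset v) ∩ M).card : ℝ)
        ≤ ∑ v ∈ M, (((G.neighborFinset v) ∩ M).card : ℝ) :=
      Finset.sum_le_sum_of_subset_of_nonneg hsub (fun v _ _ => Nat.cast_nonneg _)
    have hs3 : ∑ v ∈ M, (((G.neighborFinset v) ∩ M).card : ℝ) ≤ 2 * α * M.card := by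
      exact_mod_cast key M
    linarith
  -- conclude
  rw [le_div_iff₀ (mul_pos hr hs)]
  have e1 := mul_le_mul_of_nonneg_right step2 hr.le
  have e2 := mul_le_mul_of_nonneg_left step1 (by positivity : (0:ℝ) ≤ 2 * α)
  calc (M'.card : ℝ) * (r * s) = ((M'.card : ℝ) * s) * r := by ring
    _ ≤ (2 * α * M.card) * r := e1
    _ = 2 * α * ((M.card : ℝ) * r) := by ring
    _ ≤ 2 * α * (2 * α * n) := e2
    _ = 4 * α ^ 2 * n := by ring
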